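/- Theorem 2.1, part 1 (interchange of integration and differentiation). Let π be a probability measure on Θ such that (i) the function θ ↦ Q(θ,Y) is π-integrable, and (ii) there exists M < ∞ with f(Y|θ,t) ≤ M for all t ∈ [0,1] and π-almost every θ. Then for every t ∈ [0,1] the map s ↦ z_s = ∫_Θ f(Y|θ,s) dπ(θ) is differentiable at t (one-sidedly at the endpoints, i.e. within [0,1]) with derivative ∫_Θ U(θ,Y,t) f(Y|θ,t) dπ(θ). -/

import Mathlib

/-!
STATEMENT 2 (Theorem 2.1, part 1): if θ ↦ Q(θ,Y) is π-integrable and f(Y|θ,t) ≤ M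
for all t ∈ [0,1], π-a.e. θ, then for every t ∈ [0,1] the map s ↦ z_s = ∫ f(Y|θ,s) dπ(θ)
is differentiable at t within [0,1] with derivative ∫ U(θ,Y,t) f(Y|θ,t) dπ(θ).
-/

open MeasureTheory Real Filter Set

/-- The parameter space Θ of a factor model with `p` outcomes, `k+1` factors and `n`
observations: loadings Λ ∈ ℝ^{p×(k+1)}, variances σ² ∈ (0,∞)^p and latent factors
η = (η₁,…,η_n), ηᵢ ∈ ℝ^{k+1}. -/
abbrev FactorParam (p k n : ℕ) : Type :=
  Matrix (Fin p) (Fin (k + 1)) ℝ × {σ : Fin p → ℝ // ∀ j, 0 < σ j} ×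
    (Fin n → Fin (k + 1) → ℝ)

/-- Λ_t : the matrix obtained from Λ by multiplying its last column by `t` (PAMP). -/
def pathLam {p k : ℕ} (t : ℝ) (Λ : Matrix (Fin p) (Fin (k + 1)) ℝ) :
    Matrix (Fin p) (Fin (k + 1)) ℝ :=
  fun j l => if l = Fin.last k then t * Λ j l else Λ j l

/-- The factor model likelihood f(Y|θ) = ∏ᵢ∏ⱼ (2πσⱼ²)^{-1/2} exp(−(y_{ij} − (Ληᵢ)_j)²/(2σⱼ²)). -/
noncomputable def lik {p k n : ℕ} (Y : Fin n → Fin p → ℝ) (θ : FactorParam p k n) : ℝ :=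
  ∏ i : Fin n, ∏ j : Fin p,
    (2 * π * θ.2.1.1 j) ^ (-(1 : ℝ) / 2) *
      Real.exp (-(Y i j - ∑ l, θ.1 j l * θ.2.2 i l) ^ 2 / (2 * θ.2.1.1 j))

/-- The likelihood along the parametric arithmetic mean path: f(Y|θ,t) = f(Y|(Λ_t,σ²,η)). -/
noncomputable def pathLik {p k n : ℕ} (Y : Fin n → Fin p → ℝ) (θ : FactorParam p k n)
    (t : ℝ) : ℝ :=
  lik Y (pathLam t θ.1, θ.2)

/-- The score function U(θ,Y,t) = ∑ᵢ∑ⱼ (y_{ij} − (Λ_t ηᵢ)_j) σⱼ^{−2} Λ_{jk} η_{ik}. -/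
noncomputable def scoreU {p k n : ℕ} (Y : Fin n → Fin p → ℝ) (θ : FactorParam p k n)
    (t : ℝ) : ℝ :=
  ∑ i : Fin n, ∑ j : Fin p,
    (Y i j - ∑ l, pathLam t θ.1 j l * θ.2.2 i l) * (θ.2.1.1 j)⁻¹ *
      (θ.1 j (Fin.last k) * θ.2.2 i (Fin.last k))

/-- The dominating function Q(θ,Y), free of t. -/
noncomputable def Qbound {p k n : ℕ} (Y : Fin n → Fin p → ℝ) (θ : FactorParam p k n) : ℝ :=
  ∑ i : Fin n, ∑ j : Fin p,
    (|Y i j| + ∑ l, |θ.1 j l| * |θ.2.2 i l|) * (θ.2.1.1 j)⁻¹ *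
      (|θ.1 j (Fin.last k)| * |θ.2.2 i (Fin.last k)|)

/-- The Borel-type product σ-algebra on the space of loading matrices. -/
instance {p k : ℕ} : MeasurableSpace (Matrix (Fin p) (Fin (k + 1)) ℝ) :=
  MeasurableSpace.pi

-- sum decomposition
lemma sum_pathLam {p k : ℕ} (Λ : Matrix (Fin p) (Fin (k + 1)) ℝ) (η : Fin (k + 1) → ℝ)
    (t : ℝ) (j : Fin p) :
    ∑ l, pathLam t Λ j l * η l =
      (∑ l : Fin k, Λ j l.castSucc * η l.castSucc) +
        t * (Λ j (Fin.last k) * η (Fin.last k)) := by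
  rw [Fin.sum_univ_castSucc]
  simp only [pathLam]
  congr 1
  · exact Finset.sum_congr rfl fun l _ => by rw [if_neg (Fin.castSucc_lt_last l).ne]
  · rw [if_true]; ring

lemma pathLik_eq {p k n : ℕ} (Y : Fin n → Fin p → ℝ) (θ : FactorParam p k n) (t : ℝ) :
    pathLik Y θ t = (∏ i : Fin n, ∏ j : Fin p, (2 * π * θ.2.1.1 j) ^ (-(1 : ℝ) / 2)) *
      Real.exp (∑ i : Fin n, ∑ j : Fin p,
        -(Y i j - ((∑ l : Fin k, θ.1 j l.castSucc * θ.2.2 i l.castSucc) +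
          t * (θ.1 j (Fin.last k) * θ.2.2 i (Fin.last k)))) ^ 2 / (2 * θ.2.1.1 j)) := by
  simp only [pathLik, lik, Real.exp_sum, ← Finset.prod_mul_distrib]
  exact Finset.prod_congr rfl fun i _ => Finset.prod_congr rfl fun j _ => by
    rw [sum_pathLam]

lemma pathLik_pos {p k n : ℕ} (Y : Fin n → Fin p → ℝ) (θ : FactorParam p k n) (t : ℝ) :
    0 < pathLik Y θ t := by
  rw [pathLik_eq]
  apply mul_pos _ (Real.exp_pos _)
  exact Finset.prod_pos fun i _ => Finset.prod_pos fun j _ =>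
    Real.rpow_pos_of_pos (by have := θ.2.1.2 j; have := Real.pi_pos; positivity) _

lemma hasDerivAt_pathLik {p k n : ℕ} (Y : Fin n → Fin p → ℝ) (θ : FactorParam p k n) (t : ℝ) :
    HasDerivAt (fun s => pathLik Y θ s) (scoreU Y θ t * pathLik Y θ t) t := by
  obtain ⟨Λ, σ, η⟩ := θ
  set A : Fin n → Fin p → ℝ := fun i j => ∑ l : Fin k, Λ j l.castSucc * η i l.castSucc with hA
  set b : Fin n → Fin p → ℝ := fun i j => Λ j (Fin.last k) * η i (Fin.last k) with hb
  set C : ℝ := ∏ i : Fin n, ∏ j : Fin p, (2 * π * σ.1 j) ^ (-(1 : ℝ) / 2) with hC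
  set E : ℝ → ℝ := fun s => ∑ i : Fin n, ∑ j : Fin p,
      -(Y i j - (A i j + s * b i j)) ^ 2 / (2 * σ.1 j) with hE
  have hfun : ∀ s, pathLik Y (Λ, σ, η) s = C * Real.exp (E s) := fun s => pathLik_eq Y _ s
  have hE' : HasDerivAt E
      (∑ i : Fin n, ∑ j : Fin p, (Y i j - (A i j + t * b i j)) * (σ.1 j)⁻¹ * b i j) t := by
    apply HasDerivAt.fun_sum
    intro i _
    apply HasDerivAt.fun_sum
    intro j _
    have h1 : HasDerivAt (fun s : ℝ => Y i j - (A i j + s * b i j)) (-b i j) t := by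
      simpa using ((hasDerivAt_id t).mul_const (b i j) |>.const_add (A i j)).const_sub (Y i j)
    have h2 := (((h1.pow 2).neg).div_const (2 * σ.1 j))
    refine h2.congr_deriv ?_
    have hσ : σ.1 j ≠ 0 := (σ.2 j).ne'
    field_simp
    ring
  have key := (hE'.exp).const_mul C
  have hsc : scoreU Y (Λ, σ, η) t * pathLik Y (Λ, σ, η) t =
      C * (Real.exp (E t) * (∑ i : Fin n, ∑ j : Fin p,
        (Y i j - (A i j + t * b i j)) * (σ.1 j)⁻¹ * b i j)) := by
    rw [hfun, scoreU]
    simp only [sum_pathLam]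
    ring
  rw [hsc]
  exact HasDerivAt.congr_of_eventuallyEq key (Filter.Eventually.of_forall fun s => (hfun s))

lemma Qbound_nonneg {p k n : ℕ} (Y : Fin n → Fin p → ℝ) (θ : FactorParam p k n) :
    0 ≤ Qbound Y θ := by
  apply Finset.sum_nonneg; intro i _
  apply Finset.sum_nonneg; intro j _
  have := (θ.2.1.2 j)
  have h0 : (0:ℝ) ≤ |Y i j| + ∑ l, |θ.1 j l| * |θ.2.2 i l| := by positivity
  positivity

lemma abs_scoreU_le {p k n : ℕ} (Y : Fin n → Fin p → ℝ) (θ : FactorParam p k n) {t : ℝ}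
    (ht : t ∈ Set.Icc (0 : ℝ) 1) : |scoreU Y θ t| ≤ Qbound Y θ := by
  refine (Finset.abs_sum_le_sum_abs _ _).trans (Finset.sum_le_sum fun i _ => ?_)
  refine (Finset.abs_sum_le_sum_abs _ _).trans (Finset.sum_le_sum fun j _ => ?_)
  rw [abs_mul, abs_mul, abs_mul, abs_inv, abs_of_pos (θ.2.1.2 j)]
  have hS : |Y i j - ∑ l, pathLam t θ.1 j l * θ.2.2 i l| ≤
      |Y i j| + ∑ l, |θ.1 j l| * |θ.2.2 i l| := by
    refine (abs_sub _ _).trans (add_le_add_right ?_ _)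
    refine (Finset.abs_sum_le_sum_abs _ _).trans (Finset.sum_le_sum fun l _ => ?_)
    rw [abs_mul]
    have hle : |pathLam t θ.1 j l| ≤ |θ.1 j l| := by
      simp only [pathLam]
      split_ifs with h
      · rw [abs_mul]
        calc |t| * |θ.1 j l| ≤ 1 * |θ.1 j l| :=
              mul_le_mul_of_nonneg_right (abs_le.2 ⟨by linarith [ht.1], ht.2⟩) (abs_nonneg _)
          _ = |θ.1 j l| := one_mul _
      · exact le_refl _
    exact mul_le_mul_of_nonneg_right hle (abs_nonneg _)
  exact mul_le_mul_of_nonneg_right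
    (mul_le_mul_of_nonneg_right hS (inv_nonneg.2 (θ.2.1.2 j).le))
    (mul_nonneg (abs_nonneg _) (abs_nonneg _))

lemma measurable_pathLik {p k n : ℕ} (Y : Fin n → Fin p → ℝ) (s : ℝ) :
    Measurable (fun θ : FactorParam p k n => pathLik Y θ s) := by
  have hΛ : ∀ (j : Fin p) (l : Fin (k + 1)),
      Measurable (fun θ : FactorParam p k n => θ.1 j l) := fun j l =>
    ((measurable_pi_apply l).comp ((measurable_pi_apply j).comp measurable_fst))
  have hσ : ∀ (j : Fin p), Measurable (fun θ : FactorParam p k n => θ.2.1.1 j) := fun j =>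
    (measurable_pi_apply j).comp (measurable_subtype_coe.comp (measurable_fst.comp measurable_snd))
  have hη : ∀ (i : Fin n) (l : Fin (k + 1)),
      Measurable (fun θ : FactorParam p k n => θ.2.2 i l) := fun i l =>
    (measurable_pi_apply l).comp ((measurable_pi_apply i).comp (measurable_snd.comp measurable_snd))
  simp only [pathLik, lik]
  apply Finset.measurable_prod; intro i _
  apply Finset.measurable_prod; intro j _
  apply Measurable.mul
  · have hin : Measurable (fun θ : FactorParam p k n => 2 * π * θ.2.1.1 j) :=
      (hσ j).const_mul (2 * π)
    measurability
  · apply Measurable.exp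
    apply Measurable.div
    · apply Measurable.neg
      apply Measurable.pow _ measurable_const
      apply Measurable.sub measurable_const
      apply Finset.measurable_sum; intro l _
      apply Measurable.mul _ (hη i l)
      simp only [pathLam]
      split_ifs with h
      · exact (hΛ j l).const_mul s
      · exact hΛ j l
    · exact (hσ j).const_mul 2

theorem interchange_integral_deriv {p k n : ℕ} (Y : Fin n → Fin p → ℝ)
    (P : MeasureTheory.Measure (FactorParam p k n)) [MeasureTheory.IsProbabilityMeasure P]
    (hQ : MeasureTheory.Integrable (fun θ => Qbound Y θ) P)
    (M : ℝ) (hM : ∀ᵐ θ ∂P, ∀ t ∈ Set.Icc (0 : ℝ) 1, pathLik Y θ t ≤ M) :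
    ∀ t ∈ Set.Icc (0 : ℝ) 1,
      HasDerivWithinAt (fun s : ℝ => ∫ θ, pathLik Y θ s ∂P)
        (∫ θ, scoreU Y θ t * pathLik Y θ t ∂P) (Set.Icc (0 : ℝ) 1) t := by
  intro t ht
  have hmeas : ∀ s, AEStronglyMeasurable (fun θ => pathLik Y θ s) P :=
    fun s => (measurable_pathLik Y s).aestronglyMeasurable
  have hint : ∀ s ∈ Set.Icc (0 : ℝ) 1, Integrable (fun θ => pathLik Y θ s) P := by
    intro s hs
    refine Integrable.mono' (integrable_const M) (hmeas s) ?_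
    filter_upwards [hM] with θ hθ
    rw [Real.norm_eq_abs, abs_of_pos (pathLik_pos Y θ s)]
    exact hθ s hs
  rw [hasDerivWithinAt_iff_tendsto_slope]
  have key := tendsto_integral_filter_of_dominated_convergence
      (μ := P) (l := nhdsWithin t (Set.Icc (0:ℝ) 1 \ {t}))
      (F := fun s θ => (pathLik Y θ s - pathLik Y θ t) / (s - t))
      (f := fun θ => scoreU Y θ t * pathLik Y θ t)
      (bound := fun θ => Qbound Y θ * M)
      (Filter.Eventually.of_forall fun s =>
        (((measurable_pathLik Y s).sub (measurable_pathLik Y t)).div_const _).aestronglyMeasurable)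
      ?_ (hQ.mul_const M)
      (Filter.Eventually.of_forall fun θ =>
        (Filter.Tendsto.congr (fun s => slope_def_field (pathLik Y θ) t s)
          (hasDerivWithinAt_iff_tendsto_slope.mp
            ((hasDerivAt_pathLik Y θ t).hasDerivWithinAt (s := Set.Icc (0:ℝ) 1)))))
  · refine key.congr' ?_
    filter_upwards [eventually_mem_nhdsWithin] with s hs
    rw [slope_def_field, MeasureTheory.integral_div,
      integral_sub (hint s hs.1) (hint t ht)]
  · -- the domination
    filter_upwards [eventually_mem_nhdsWithin] with s hs
    filter_upwards [hM] with θ hθ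
    obtain ⟨hsI, hst⟩ := hs
    have hst' : s ≠ t := hst
    have habs : ∀ c ∈ Set.Icc (0:ℝ) 1,
        |scoreU Y θ c * pathLik Y θ c| ≤ Qbound Y θ * M := by
      intro c hc
      rw [abs_mul]
      exact mul_le_mul (abs_scoreU_le Y θ hc)
        (by rw [abs_of_pos (pathLik_pos Y θ c)]; exact hθ c hc)
        (abs_nonneg _) (Qbound_nonneg Y θ)
    have hcont : Continuous (pathLik Y θ) := continuous_iff_continuousAt.mpr
      fun x => (hasDerivAt_pathLik Y θ x).continuousAt
    rw [Real.norm_eq_abs]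
    rcases lt_or_gt_of_ne hst' with h | h
    · obtain ⟨c, hc, hceq⟩ := exists_hasDerivAt_eq_slope (pathLik Y θ)
        (fun x => scoreU Y θ x * pathLik Y θ x) h hcont.continuousOn
        (fun x _ => hasDerivAt_pathLik Y θ x)
      have : (pathLik Y θ s - pathLik Y θ t) / (s - t) =
          (pathLik Y θ t - pathLik Y θ s) / (t - s) := by
        rw [← neg_div_neg_eq]; ring_nf
      rw [this, ← hceq]
      exact habs c ⟨le_trans hsI.1 hc.1.le, le_trans hc.2.le ht.2⟩
    · obtain ⟨c, hc, hceq⟩ := exists_hasDerivAt_eq_slope (pathLik Y θ)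
        (fun x => scoreU Y θ x * pathLik Y θ x) h hcont.continuousOn
        (fun x _ => hasDerivAt_pathLik Y θ x)
      rw [← hceq]
      exact habs c ⟨le_trans ht.1 hc.1.le, le_trans hc.2.le hsI.2⟩
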